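/- Fix an integer n ≥ 1 and α ∈ (0, nπ). On the open set S = {k ∈ ℝⁿ : kᵢ > 0 for all i} there exists a continuously differentiable function g : S → ℝ such that for every k ∈ S one has g(k) > 1 and Σᵢ₌₁ⁿ 2·arctan(√(g(k)² − 1)/kᵢ) = α. -/

import Mathlib

open Real Filter Topology



namespace Stmt3Aux

variable {n : ℕ}

/-- The sum function. -/
noncomputable def hsum (k : Fin n → ℝ) (t : ℝ) : ℝ := ∑ i, 2 * Real.arctan (t / k i)

lemma hsum_strictMono {k : Fin n → ℝ} (hn : 1 ≤ n) (hk : ∀ i, 0 < k i) :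
    StrictMono (hsum k) := by
  intro t₁ t₂ h
  have : Nonempty (Fin n) := ⟨⟨0, hn⟩⟩
  apply Finset.sum_lt_sum_of_nonempty (by simp [Finset.univ_nonempty])
  intro i _
  have : t₁ / k i < t₂ / k i := by
    exact div_lt_div_of_pos_right h (hk i)
  have := Real.arctan_strictMono this
  linarith

lemma hsum_continuous (k : Fin n → ℝ) : Continuous (hsum k) := by
  apply continuous_finset_sum
  intro i _
  exact continuous_const.mul (Real.continuous_arctan.comp (continuous_id.div_const _))

lemma hsum_zero (k : Fin n → ℝ) : hsum k 0 = 0 := by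
  simp [hsum]

lemma hsum_tendsto {k : Fin n → ℝ} (hk : ∀ i, 0 < k i) :
    Tendsto (hsum k) atTop (𝓝 (n * Real.pi)) := by
  have h1 : ∀ i : Fin n, Tendsto (fun t => 2 * Real.arctan (t / k i)) atTop (𝓝 (2 * (Real.pi / 2))) := by
    intro i
    apply Tendsto.const_mul
    have h2 : Tendsto (fun t : ℝ => t / k i) atTop atTop :=
      tendsto_id.atTop_div_const (hk i)
    exact (Real.tendsto_arctan_atTop.mono_right nhdsWithin_le_nhds).comp h2
  have := tendsto_finset_sum Finset.univ (fun i _ => h1 i)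
  have heq : (n:ℝ) * (2 * (Real.pi / 2)) = n * Real.pi := by ring
  rw [← heq]
  exact (by simpa using this : Tendsto (fun b => ∑ c, 2 * arctan (b / k c)) atTop (𝓝 (↑n * (2 * (π / 2)))))

lemma exists_root (hn : 1 ≤ n) {α : ℝ} (hα₀ : 0 < α) (hα₁ : α < n * Real.pi)
    {k : Fin n → ℝ} (hk : ∀ i, 0 < k i) :
    ∃ t : ℝ, 0 < t ∧ hsum k t = α := by
  have hev : ∀ᶠ t in atTop, α < hsum k t :=
    (hsum_tendsto hk).eventually (eventually_gt_nhds hα₁)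
  obtain ⟨T₀, hT₀⟩ := hev.exists_forall_of_atTop
  set T := max T₀ 1 with hT
  have hTα : α < hsum k T := hT₀ T (le_max_left _ _)
  have h0T : (0:ℝ) ≤ T := le_trans zero_le_one (le_max_right _ _)
  have := intermediate_value_Ioo h0T (hsum_continuous k).continuousOn
    (show α ∈ Set.Ioo (hsum k 0) (hsum k T) by
      rw [hsum_zero]; exact ⟨hα₀, hTα⟩)
  obtain ⟨t, ht, hteq⟩ := this
  exact ⟨t, ht.1, hteq⟩

end Stmt3Aux

namespace Stmt3Aux

noncomputable def Hfun : ((Fin n → ℝ) × ℝ) → ℝ := fun p => hsum p.1 p.2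

noncomputable def Φfun : ((Fin n → ℝ) × ℝ) → ((Fin n → ℝ) × ℝ) := fun p => (p.1, Hfun p)

lemma Hfun_contDiffAt {p : (Fin n → ℝ) × ℝ} (hp : ∀ i, p.1 i ≠ 0) :
    ContDiffAt ℝ 1 (Hfun (n := n)) p := by
  have : ∀ i : Fin n, ContDiffAt ℝ 1 (fun q : (Fin n → ℝ) × ℝ => 2 * Real.arctan (q.2 / q.1 i)) p := by
    intro i
    have hdiv : ContDiffAt ℝ 1 (fun q : (Fin n → ℝ) × ℝ => q.2 / q.1 i) p :=
      contDiff_snd.contDiffAt.div ((contDiff_pi.mp contDiff_fst i).contDiffAt) (hp i)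
    exact contDiffAt_const.mul ((Real.contDiff_arctan.contDiffAt).comp p hdiv)
  have h := ContDiffAt.sum (s := Finset.univ) (fun i _ => this i)
  exact (by simpa using h : ContDiffAt ℝ 1 (fun x : (Fin n → ℝ) × ℝ => ∑ i, 2 * arctan (x.2 / x.1 i)) p)

lemma hasDerivAt_hsum (k : Fin n → ℝ) (t₀ : ℝ) (hk : ∀ i, 0 < k i) :
    HasDerivAt (hsum k) (∑ i, 2 * ((1 + (t₀ / k i) ^ 2)⁻¹ * (k i)⁻¹)) t₀ := by
  apply HasDerivAt.fun_sum
  intro i _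
  have h1 : HasDerivAt (fun t : ℝ => t / k i) (k i)⁻¹ t₀ := by
    simpa [one_div] using (hasDerivAt_id t₀).div_const (k i)
  have h2 := (Real.hasDerivAt_arctan' (t₀ / k i)).comp t₀ h1
  simpa [Function.comp] using h2.const_mul 2

lemma t_smooth (hn : 1 ≤ n) {α : ℝ} {t : (Fin n → ℝ) → ℝ}
    (hspec : ∀ k : Fin n → ℝ, (∀ i, 0 < k i) → 0 < t k ∧ hsum k (t k) = α)
    {k₀ : Fin n → ℝ} (hk₀ : ∀ i, 0 < k₀ i) : ContDiffAt ℝ 1 t k₀ := by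
  classical
  obtain ⟨ht₀pos, ht₀eq⟩ := hspec k₀ hk₀
  set t₀ := t k₀ with ht₀
  set p₀ : (Fin n → ℝ) × ℝ := (k₀, t₀) with hp₀
  have hne : ∀ i, p₀.1 i ≠ 0 := fun i => (hk₀ i).ne'
  have hH : ContDiffAt ℝ 1 (Hfun (n := n)) p₀ := Hfun_contDiffAt hne
  have hΦ : ContDiffAt ℝ 1 (Φfun (n := n)) p₀ := contDiff_fst.contDiffAt.prodMk hH
  set L := fderiv ℝ (Hfun (n := n)) p₀ with hLdef
  have hHL : HasFDerivAt (Hfun (n := n)) L p₀ := (hH.differentiableAt one_ne_zero).hasFDerivAt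
  set c := ∑ i, 2 * ((1 + (t₀ / k₀ i) ^ 2)⁻¹ * (k₀ i)⁻¹) with hc
  have hcpos : 0 < c :=
    Finset.sum_pos (fun i _ => by have := hk₀ i; positivity) ⟨⟨0, hn⟩, Finset.mem_univ _⟩
  have hcurve : HasDerivAt (fun s : ℝ => ((k₀, s) : (Fin n → ℝ) × ℝ)) ((0 : Fin n → ℝ), (1:ℝ)) t₀ :=
    HasDerivAt.prodMk (hasDerivAt_const _ _) (hasDerivAt_id _)
  have hcomp : HasDerivAt (fun s => Hfun (n := n) (k₀, s)) (L ((0 : Fin n → ℝ), (1:ℝ))) t₀ :=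
    hHL.comp_hasDerivAt t₀ hcurve
  have hL01 : L ((0 : Fin n → ℝ), (1:ℝ)) = c := hcomp.unique (hasDerivAt_hsum k₀ t₀ hk₀)
  set Φ' : ((Fin n → ℝ) × ℝ) →L[ℝ] ((Fin n → ℝ) × ℝ) :=
    (ContinuousLinearMap.fst ℝ (Fin n → ℝ) ℝ).prod L with hΦ'def
  have hΦ'd : HasFDerivAt (Φfun (n := n)) Φ' p₀ := HasFDerivAt.prodMk (hasFDerivAt_fst) hHL
  have hinj : Function.Injective Φ' := by
    rw [injective_iff_map_eq_zero]
    rintro ⟨dk, dt⟩ hv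
    have h1 : dk = 0 := congrArg Prod.fst hv
    have h2 : L (dk, dt) = 0 := congrArg Prod.snd hv
    have h3 : ((dk, dt) : (Fin n → ℝ) × ℝ) = dt • ((0 : Fin n → ℝ), (1:ℝ)) := by
      rw [h1]; ext <;> simp
    rw [h3, map_smul, hL01, smul_eq_mul] at h2
    have h4 : dt = 0 := by
      rcases mul_eq_zero.mp h2 with h | h
      · exact h
      · exact absurd h hcpos.ne'
    simp [h1, h4]
  set e₀ : ((Fin n → ℝ) × ℝ) ≃ₗ[ℝ] ((Fin n → ℝ) × ℝ) :=
    LinearEquiv.ofBijective (Φ' : ((Fin n → ℝ) × ℝ) →ₗ[ℝ] ((Fin n → ℝ) × ℝ))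
      ⟨hinj, LinearMap.injective_iff_surjective.mp hinj⟩ with he₀
  set e : ((Fin n → ℝ) × ℝ) ≃L[ℝ] ((Fin n → ℝ) × ℝ) := e₀.toContinuousLinearEquiv with he
  have hecoe : (e : ((Fin n → ℝ) × ℝ) →L[ℝ] ((Fin n → ℝ) × ℝ)) = Φ' := by
    ext v <;> rfl
  have hΦ'e : HasFDerivAt (Φfun (n := n)) (e : ((Fin n → ℝ) × ℝ) →L[ℝ] ((Fin n → ℝ) × ℝ)) p₀ := by
    rw [hecoe]; exact hΦ'd
  set inv := hΦ.localInverse hΦ'e one_ne_zero with hinvdef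
  have hΦp₀ : Φfun (n := n) p₀ = (k₀, α) := by
    simp only [Φfun, Hfun, p₀]
    exact Prod.ext rfl ht₀eq
  have hinvCD : ContDiffAt ℝ 1 inv (k₀, α) := hΦp₀ ▸ hΦ.to_localInverse hΦ'e one_ne_zero
  have hstrict := hΦ.hasStrictFDerivAt' hΦ'e one_ne_zero
  have hrinv : ∀ᶠ y in 𝓝 (Φfun (n := n) p₀), Φfun (n := n) (inv y) = y :=
    hstrict.eventually_right_inverse
  have hmk : ContDiffAt ℝ 1 (fun k : Fin n → ℝ => ((k, α) : (Fin n → ℝ) × ℝ)) k₀ :=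
    (contDiff_id.prodMk contDiff_const).contDiffAt
  have hmap : Filter.Tendsto (fun k : Fin n → ℝ => ((k, α) : (Fin n → ℝ) × ℝ)) (𝓝 k₀)
      (𝓝 (Φfun (n := n) p₀)) := by
    rw [hΦp₀]; exact (continuous_id.prodMk continuous_const).continuousAt
  have hev1 : ∀ᶠ k in 𝓝 k₀, Φfun (n := n) (inv (k, α)) = (k, α) := hmap.eventually hrinv
  have hSopen : IsOpen {k : Fin n → ℝ | ∀ i, 0 < k i} := by
    have : {k : Fin n → ℝ | ∀ i, 0 < k i} = ⋂ i, (fun k : Fin n → ℝ => k i) ⁻¹' Set.Ioi 0 := by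
      ext k; simp [Set.mem_iInter]
    rw [this]
    exact isOpen_iInter_of_finite fun i => isOpen_Ioi.preimage (continuous_apply i)
  have hev2 : ∀ᶠ k in 𝓝 k₀, ∀ i, 0 < k i := hSopen.mem_nhds hk₀
  have hevEq : (fun k => (inv (k, α)).2) =ᶠ[𝓝 k₀] t := by
    filter_upwards [hev1, hev2] with k h1 h2
    have hfst : (inv (k, α)).1 = k := congrArg Prod.fst h1
    have hsnd : Hfun (n := n) (inv (k, α)) = α := congrArg Prod.snd h1
    have hval : hsum k ((inv (k, α)).2) = α := by
      have h3 : hsum (inv (k, α)).1 ((inv (k, α)).2) = α := hsnd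
      rwa [hfst] at h3
    exact (hsum_strictMono hn h2).injective (by rw [hval, (hspec k h2).2])
  have hc1 : ContDiffAt ℝ 1 (fun k : Fin n → ℝ => inv (k, α)) k₀ := hinvCD.comp k₀ hmk
  have hc2 : ContDiffAt ℝ 1 (fun k : Fin n → ℝ => (inv (k, α)).2) k₀ :=
    contDiff_snd.contDiffAt.comp k₀ hc1
  exact hc2.congr_of_eventuallyEq hevEq.symm

end Stmt3Aux

/-- For a fixed `n ≥ 1` and `α ∈ (0, nπ)`, on the open set
`S = {k ∈ ℝⁿ : kᵢ > 0 for all i}` there is a `C¹` function `g : S → ℝ` with `g k > 1`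
and `∑ i, 2 * arctan (√(g(k)² − 1) / kᵢ) = α` for every `k ∈ S`. -/
theorem stmt_3 (n : ℕ) (hn : 1 ≤ n) (α : ℝ) (hα₀ : 0 < α) (hα₁ : α < n * Real.pi) :
    ∃ g : (Fin n → ℝ) → ℝ,
      ContDiffOn ℝ 1 g {k : Fin n → ℝ | ∀ i, 0 < k i} ∧
      ∀ k ∈ {k : Fin n → ℝ | ∀ i, 0 < k i},
        1 < g k ∧ ∑ i, 2 * Real.arctan (Real.sqrt ((g k) ^ 2 - 1) / k i) = α := by
  classical
  have hroot : ∀ k : Fin n → ℝ, (∀ i, 0 < k i) → ∃ t, 0 < t ∧ Stmt3Aux.hsum k t = α :=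
    fun k hk => Stmt3Aux.exists_root hn hα₀ hα₁ hk
  set t : (Fin n → ℝ) → ℝ := fun k =>
    if hk : ∀ i, 0 < k i then (hroot k hk).choose else 1 with htdef
  have hspec : ∀ k : Fin n → ℝ, (∀ i, 0 < k i) → 0 < t k ∧ Stmt3Aux.hsum k (t k) = α := by
    intro k hk
    simp only [htdef, dif_pos hk]
    exact (hroot k hk).choose_spec
  have htCD : ∀ k₀ : Fin n → ℝ, (∀ i, 0 < k₀ i) → ContDiffAt ℝ 1 t k₀ :=
    fun k₀ hk₀ => Stmt3Aux.t_smooth hn hspec hk₀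
  refine ⟨fun k => Real.sqrt (1 + t k ^ 2), ?_, ?_⟩
  · intro k₀ hk₀
    have h1 : ContDiffAt ℝ 1 (fun k => 1 + t k ^ 2) k₀ :=
      contDiffAt_const.add ((htCD k₀ hk₀).pow 2)
    have h2 : (1 : ℝ) + t k₀ ^ 2 ≠ 0 := by positivity
    exact ((Real.contDiffAt_sqrt h2).comp k₀ h1).contDiffWithinAt
  · intro k hk
    obtain ⟨htpos, hteq⟩ := hspec k hk
    have hsq : Real.sqrt (1 + t k ^ 2) ^ 2 - 1 = t k ^ 2 := by
      rw [Real.sq_sqrt (by positivity)]; ring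
    constructor
    · have : (1:ℝ) < 1 + t k ^ 2 := by nlinarith
      calc (1:ℝ) = Real.sqrt 1 := (Real.sqrt_one).symm
        _ < Real.sqrt (1 + t k ^ 2) := by
            exact Real.sqrt_lt_sqrt zero_le_one this
    · rw [hsq, Real.sqrt_sq htpos.le]
      exact hteq
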